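/- Let M be a finite-length module over a local ring (A, m) containing an element π with π^p = p for a prime p. Then ℓ(M_p) ≤ p · ℓ(M_π), where M_x denotes the x-torsion submodule and ℓ denotes length. -/
import Mathlib

/-- The length of a module, defined as the Krull dimension of its submodule lattice. -/
noncomputable def moduleLength (A : Type*) (M : Type*) [Semiring A] [AddCommMonoid M]
    [Module A M] : WithBot ℕ∞ :=
  Order.krullDim (Submodule A M)

section Dim

open Order

variable {α β : Type*} [Preorder α] [Preorder β]

lemma exists_ltSeries_prod (p : LTSeries (α × β)) :
    ∃ (q : LTSeries α) (r : LTSeries β),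
      q.last ≤ p.last.1 ∧ r.last ≤ p.last.2 ∧ p.length ≤ q.length + r.length := by
  suffices H : ∀ n (p : LTSeries (α × β)), p.length = n →
      ∃ (q : LTSeries α) (r : LTSeries β),
        q.last ≤ p.last.1 ∧ r.last ≤ p.last.2 ∧ p.length ≤ q.length + r.length from
    H _ p rfl
  intro n
  induction n with
  | zero =>
    intro p hp
    exact ⟨RelSeries.singleton _ p.last.1, RelSeries.singleton _ p.last.2, le_refl _, le_refl _,
      by simp [hp]⟩
  | succ n ih =>
    intro p hp
    obtain ⟨q, r, hq, hr, hlen⟩ := ih p.eraseLast (by simp [hp])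
    have hstep : p.eraseLast.last < p.last := p.eraseLast_last_rel_last (by omega)
    have hlen' : p.eraseLast.length = n := by simp [hp]
    rcases Prod.lt_iff.mp hstep with ⟨h1, h2⟩ | ⟨h1, h2⟩
    · refine ⟨q.snoc p.last.1 (lt_of_le_of_lt hq h1), r, by simp, hr.trans h2, ?_⟩
      simpa [hp, hlen'] using by omega
    · refine ⟨q, r.snoc p.last.2 (lt_of_le_of_lt hr h2), hq.trans h1, by simp, ?_⟩
      simp only [RelSeries.snoc_length]
      omega

lemma krullDim_prod_le : krullDim (α × β) ≤ krullDim α + krullDim β := by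
  refine iSup_le fun p => ?_
  obtain ⟨q, r, -, -, h⟩ := exists_ltSeries_prod p
  calc (p.length : WithBot ℕ∞) ≤ ((q.length + r.length : ℕ) : WithBot ℕ∞) := by
        exact_mod_cast h
    _ = (q.length : WithBot ℕ∞) + (r.length : WithBot ℕ∞) := by push_cast; ring
    _ ≤ krullDim α + krullDim β :=
        add_le_add (Order.LTSeries.length_le_krullDim q) (Order.LTSeries.length_le_krullDim r)

lemma krullDim_pi_fin_le (n : ℕ) : krullDim (Fin n → α) ≤ n • krullDim α := by
  induction n with
  | zero =>
    rw [krullDim_eq_zero_of_unique, zero_nsmul]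
  | succ n ih =>
    have e : (Fin (n + 1) → α) ≃o α × (Fin n → α) :=
      (Fin.insertNthOrderIso (fun _ => α) 0).symm
    calc krullDim (Fin (n + 1) → α) = krullDim (α × (Fin n → α)) := krullDim_eq_of_orderIso e
      _ ≤ krullDim α + krullDim (Fin n → α) := krullDim_prod_le
      _ ≤ krullDim α + n • krullDim α := by gcongr
      _ = (n + 1) • krullDim α := by rw [succ_nsmul, add_comm]

end Dim

section Torsion

open Submodule

variable {A M : Type*} [CommRing A] [AddCommGroup M] [Module A M]

private lemma key_le (π : A) (p : ℕ) (S U : Submodule A M) (hSU : S ≤ U)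
    (hU : U ≤ LinearMap.ker (LinearMap.lsmul A M (π ^ p)))
    (h : ∀ t < p,
      Submodule.map (LinearMap.lsmul A M (π ^ t))
          (S ⊓ LinearMap.ker (LinearMap.lsmul A M (π ^ (t + 1)))) =
        Submodule.map (LinearMap.lsmul A M (π ^ t))
          (U ⊓ LinearMap.ker (LinearMap.lsmul A M (π ^ (t + 1))))) :
    U ≤ S := by
  have claim : ∀ t, t ≤ p →
      U ⊓ LinearMap.ker (LinearMap.lsmul A M (π ^ t)) ≤ S := by
    intro t
    induction t with
    | zero =>
      intro _ x hx
      obtain ⟨-, hx2⟩ := Submodule.mem_inf.mp hx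
      have hx0 : x = 0 := by simpa using LinearMap.mem_ker.mp hx2
      simp [hx0]
    | succ t ih =>
      intro hle x hx
      obtain ⟨hxU, hxK⟩ := Submodule.mem_inf.mp hx
      have ht : t < p := Nat.lt_of_succ_le hle
      have hmem : (LinearMap.lsmul A M (π ^ t)) x ∈
          Submodule.map (LinearMap.lsmul A M (π ^ t))
            (U ⊓ LinearMap.ker (LinearMap.lsmul A M (π ^ (t + 1)))) :=
        Submodule.mem_map_of_mem hx
      rw [← h t ht] at hmem
      obtain ⟨y, hy, hxy⟩ := Submodule.mem_map.mp hmem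
      obtain ⟨hyS, -⟩ := Submodule.mem_inf.mp hy
      have hsub : x - y ∈ S := by
        refine ih (Nat.le_of_succ_le hle) (Submodule.mem_inf.mpr ⟨sub_mem hxU (hSU hyS), ?_⟩)
        rw [LinearMap.mem_ker, LinearMap.lsmul_apply, smul_sub]
        simp only [LinearMap.lsmul_apply] at hxy
        rw [hxy, sub_self]
      have : x = (x - y) + y := by abel
      rw [this]
      exact S.add_mem hsub hyS
  intro x hx
  exact claim p le_rfl (Submodule.mem_inf.mpr ⟨hx, hU hx⟩)

end Torsion

theorem length_pTorsion_le
    (A : Type) [CommRing A] [IsLocalRing A] (p : ℕ) (hp : p.Prime)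
    (π : A) (hπ : π ^ p = (p : A))
    (M : Type) [AddCommGroup M] [Module A M] (hM : IsFiniteLength A M) :
    moduleLength A (Submodule.torsionBy A M ((p : A))) ≤
      p • moduleLength A (Submodule.torsionBy A M π) := by
  classical
  set T := Submodule.torsionBy A M ((p : A)) with hTdef
  set P := Submodule.torsionBy A M π with hPdef
  have hT : T = LinearMap.ker (LinearMap.lsmul A M (π ^ p)) := by
    ext x
    simp [hTdef, Submodule.mem_torsionBy_iff, hπ]
  -- the auxiliary images
  set X : Submodule A T → ℕ → Submodule A M := fun S t =>
    Submodule.map (LinearMap.lsmul A M (π ^ t))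
      (Submodule.map T.subtype S ⊓ LinearMap.ker (LinearMap.lsmul A M (π ^ (t + 1)))) with hXdef
  have hXP : ∀ S t, X S t ≤ P := by
    rintro S t x hx
    obtain ⟨y, hy, rfl⟩ := Submodule.mem_map.mp hx
    obtain ⟨-, hy2⟩ := Submodule.mem_inf.mp hy
    have hy2' : (π ^ (t + 1)) • y = 0 := by simpa using LinearMap.mem_ker.mp hy2
    rw [hPdef, Submodule.mem_torsionBy_iff]
    rw [LinearMap.lsmul_apply, smul_smul, ← pow_succ']
    exact hy2'
  set Φ : Submodule A T → (Fin p → Submodule A P) := fun S t =>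
    Submodule.comap P.subtype (X S (t : ℕ)) with hΦdef
  have hΦ : StrictMono Φ := by
    intro S U hSU
    have hle : Φ S ≤ Φ U := by
      intro t
      exact Submodule.comap_mono (Submodule.map_mono
        (inf_le_inf (Submodule.map_mono hSU.le) le_rfl))
    refine lt_of_le_of_ne hle ?_
    intro heq
    have hXeq : ∀ t < p, X S t = X U t := by
      intro t ht
      have h1 : Submodule.comap P.subtype (X S t) = Submodule.comap P.subtype (X U t) :=
        congrFun heq ⟨t, ht⟩
      have h2 := congrArg (Submodule.map P.subtype) h1
      rwa [Submodule.map_comap_subtype, Submodule.map_comap_subtype,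
        inf_eq_right.mpr (hXP S t), inf_eq_right.mpr (hXP U t)] at h2
    have hUS : Submodule.map T.subtype U ≤ Submodule.map T.subtype S := by
      refine key_le π p _ _ (Submodule.map_mono hSU.le) ?_ hXeq
      rw [← hT]
      exact Submodule.map_subtype_le T U
    have : U ≤ S :=
      (Submodule.map_le_map_iff_of_injective T.injective_subtype U S).mp hUS
    exact hSU.not_ge this
  calc moduleLength A T = Order.krullDim (Submodule A T) := rfl
    _ ≤ Order.krullDim (Fin p → Submodule A P) := Order.krullDim_le_of_strictMono Φ hΦ
    _ ≤ p • Order.krullDim (Submodule A P) := krullDim_pi_fin_le p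
    _ = p • moduleLength A P := rfl
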